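/- Let k ≥ 1 and suppose v ∈ ℝ^{8+k} has all entries positive and satisfies the block system: U₁₁v₁ + U₁₂v₂ = [1]_{5×1}, U₂₁v₁ + U₂₂v₂ + [1]_{3×k}v₃ = [1]_{3×1}, [1]_{k×3}v₂ + 3v₃ = [1]_{k×1}, where [U₁₁ U₁₂; U₂₁ U₂₂] = U₈ is the 8×8 Gram matrix. Then the number a = 1 − Σ_{i=9}^{8+k} v_i lies strictly between 0 and 1. -/

import Mathlib

noncomputable def U8 : Matrix (Fin 8) (Fin 8) ℝ :=
  !![3,1,1,1,0,0,0,1;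
     1,3,1,0,1,1,0,0;
     1,1,3,0,0,0,1,0;
     1,0,0,3,1,1,1,0;
     0,1,0,1,3,0,1,1;
     0,1,0,1,0,3,1,1;
     0,0,1,1,1,1,3,1;
     1,0,0,0,1,1,1,3]

/-- Suppose `(v, v₃) ∈ ℝ^{8+k}` has all positive entries and satisfies the
block system `U₁₁v₁ + U₁₂v₂ = 1`, `U₂₁v₁ + U₂₂v₂ + [1]v₃ = 1`,
`[1]v₂ + 3v₃ = 1` (rows `0–4`, rows `5–7`, and the last `k` rows of the full
Gram matrix).  Then `a = 1 − Σ (v₃)ᵢ` lies strictly between `0` and `1`. -/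
theorem stmt16 (k : ℕ) (hk : 1 ≤ k)
    (v : Fin 8 → ℝ) (v₃ : Fin k → ℝ)
    (hvpos : ∀ i, 0 < v i) (hv₃pos : ∀ l, 0 < v₃ l)
    (h1 : ∀ i : Fin 8, (i : ℕ) < 5 → ∑ j, U8 i j * v j = 1)
    (h2 : ∀ i : Fin 8, 5 ≤ (i : ℕ) → ∑ j, U8 i j * v j + ∑ l, v₃ l = 1)
    (h3 : ∀ l : Fin k, (v 5 + v 6 + v 7) + 3 * v₃ l = 1) :
    0 < 1 - ∑ l, v₃ l ∧ 1 - ∑ l, v₃ l < 1 := by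
  have h := h2 5 (by decide)
  have e : ∀ j, U8 5 j = ![(0:ℝ),1,0,1,0,3,1,1] j := by unfold U8; intro j; rfl
  have e5 : (![(0:ℝ),1,0,1,0,3,1,1]) 5 = 3 := rfl
  have e6 : (![(0:ℝ),1,0,1,0,3,1,1]) 6 = 1 := rfl
  have e7 : (![(0:ℝ),1,0,1,0,3,1,1]) 7 = 1 := rfl
  simp only [e, Fin.sum_univ_eight, e5, e6, e7] at h
  norm_num [Matrix.cons_val_zero, Matrix.cons_val_one, Matrix.head_cons] at h
  simp only [show (![(0:ℝ),1,0,1,0,3,1,1]) 2 = 0 from rfl, show (![(0:ℝ),1,0,1,0,3,1,1]) 3 = 1 from rfl, show (![(0:ℝ),1,0,1,0,3,1,1]) 4 = 0 from rfl] at h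
  have h0 := hvpos 1
  have h3' := hvpos 3
  have h5 := hvpos 5
  have h6 := hvpos 6
  have h7 := hvpos 7
  have hS : 0 < ∑ l, v₃ l := by
    have : Nonempty (Fin k) := Fin.pos_iff_nonempty.mp hk
    exact Finset.sum_pos (fun l _ => hv₃pos l) Finset.univ_nonempty
  constructor <;> linarith
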